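/- Suppose an algorithm A is β-uniformly stable. Then the expected generalization gap satisfies |E_{D}[L(A(D)) - L_N(A(D))]| ≤ β, where L is population risk under distribution P and L_N is empirical risk on the N i.i.d. samples D. -/
import Mathlib


open MeasureTheory

lemma update_insertNth' {X : Type*} {n : ℕ} (i : Fin (n + 1)) (x z : X) (f : Fin n → X) :
    Function.update (i.insertNth (α := fun _ => X) x f) i z
      = i.insertNth (α := fun _ => X) z f := by
  funext j
  rcases eq_or_ne j i with rfl | hj
  · simp
  · rw [Function.update_of_ne hj]
    obtain ⟨k, rfl⟩ := Fin.exists_succAbove_eq hj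
    simp

lemma integrable_of_bounded' {α : Type*} [MeasurableSpace α] (μ : Measure α)
    [IsFiniteMeasure μ] {g : α → ℝ} (hg : Measurable g) (C : ℝ) (hb : ∀ a, |g a| ≤ C) :
    Integrable g μ :=
  (integrable_const C).mono' hg.aestronglyMeasurable
    (Filter.Eventually.of_forall fun a => by simpa [Real.norm_eq_abs] using hb a)

/-- Bousquet–Elisseeff: a β-uniformly stable algorithm has expected
generalization gap at most β. -/
theorem stability_generalization_in_expectation
    {X : Type*} [MeasurableSpace X] (P : Measure X) [IsProbabilityMeasure P]
    {Θ : Type*} (N : ℕ) (hN : 1 ≤ N)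
    (ℓ : Θ → X → ℝ) (M β : ℝ)
    (hbound : ∀ θ x, ℓ θ x ∈ Set.Icc 0 M)
    (A : (Fin N → X) → Θ)
    (hmeas : Measurable fun p : (Fin N → X) × X => ℓ (A p.1) p.2)
    (hstable : ∀ (D : Fin N → X) (i : Fin N) (x : X) (z : X),
      |ℓ (A D) z - ℓ (A (Function.update D i x)) z| ≤ β) :
    |∫ D, ((∫ x, ℓ (A D) x ∂P) - (1 / N) * ∑ i, ℓ (A D) (D i))
        ∂(Measure.pi fun _ : Fin N => P)| ≤ β := by
  obtain ⟨n, rfl⟩ : ∃ n, N = n + 1 := ⟨N - 1, by omega⟩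
  have hXne : Nonempty X := by
    by_contra h
    rw [not_nonempty_iff] at h
    have := measure_univ (μ := P)
    simp [Set.univ_eq_empty_iff.2 h] at this
  obtain ⟨x0⟩ := hXne
  have hM : (0 : ℝ) ≤ M := le_trans (hbound (A fun _ => x0) x0).1 (hbound _ x0).2
  have habs : ∀ θ x, |ℓ θ x| ≤ M := fun θ x =>
    abs_le.2 ⟨le_trans (neg_nonpos.2 hM) (hbound θ x).1, (hbound θ x).2⟩
  have hβ : (0 : ℝ) ≤ β := le_trans (abs_nonneg _) (hstable (fun _ => x0) 0 x0 x0)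
  set πN : Measure (Fin (n + 1) → X) := Measure.pi fun _ => P with hπN
  set πn : Measure (Fin n → X) := Measure.pi fun _ => P with hπn
  haveI : IsProbabilityMeasure πN := by rw [hπN]; infer_instance
  haveI : IsProbabilityMeasure πn := by rw [hπn]; infer_instance
  -- basic measurability
  have mg : ∀ i : Fin (n + 1), Measurable fun D : Fin (n + 1) → X => ℓ (A D) (D i) :=
    fun i => hmeas.comp (measurable_id.prodMk (measurable_pi_apply i))
  have mL : Measurable fun D : Fin (n + 1) → X => ∫ z, ℓ (A D) z ∂P :=
    (StronglyMeasurable.integral_prod_right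
      (f := fun D z => ℓ (A D) z) hmeas.stronglyMeasurable).measurable
  have iL : Integrable (fun D => ∫ z, ℓ (A D) z ∂P) πN := by
    refine integrable_of_bounded' _ mL M fun D => ?_
    have := norm_integral_le_of_norm_le_const (μ := P) (f := fun z => ℓ (A D) z) (C := M)
      (Filter.Eventually.of_forall fun z => by simpa [Real.norm_eq_abs] using habs (A D) z)
    simpa [Real.norm_eq_abs, measure_univ] using this
  have ig : ∀ i, Integrable (fun D => ℓ (A D) (D i)) πN :=
    fun i => integrable_of_bounded' _ (mg i) M fun D => habs _ _
  -- the key per-coordinate bound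
  have key : ∀ i : Fin (n + 1),
      |(∫ D, (∫ z, ℓ (A D) z ∂P) ∂πN) - ∫ D, ℓ (A D) (D i) ∂πN| ≤ β := by
    intro i
    set e := MeasurableEquiv.piFinSuccAbove (fun _ : Fin (n + 1) => X) i with he
    have mp : MeasurePreserving (⇑e.symm) (P.prod πn) πN :=
      (measurePreserving_piFinSuccAbove (fun _ => P) i).symm e
    have hsymm : ∀ q : X × (Fin n → X),
        e.symm q = i.insertNth (α := fun _ => X) q.1 q.2 := fun _ => rfl
    have mins : Measurable fun q : X × (Fin n → X) =>
        i.insertNth (α := fun _ => X) q.1 q.2 := e.symm.measurable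
    set Ω := P.prod (P.prod πn) with hΩ
    haveI : IsProbabilityMeasure Ω := by rw [hΩ]; infer_instance
    have mG : Measurable fun ω : X × X × (Fin n → X) =>
        ℓ (A (i.insertNth (α := fun _ => X) ω.2.1 ω.2.2)) ω.1 :=
      hmeas.comp ((mins.comp measurable_snd).prodMk measurable_fst)
    have mG2 : Measurable fun ω : X × X × (Fin n → X) =>
        ℓ (A (i.insertNth (α := fun _ => X) ω.1 ω.2.2)) ω.1 :=
      hmeas.comp ((mins.comp (measurable_fst.prodMk
        (measurable_snd.comp measurable_snd))).prodMk measurable_fst)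
    have iG : Integrable (fun ω : X × X × (Fin n → X) =>
        ℓ (A (i.insertNth (α := fun _ => X) ω.2.1 ω.2.2)) ω.1) Ω :=
      integrable_of_bounded' _ mG M fun ω => habs _ _
    have iG2 : Integrable (fun ω : X × X × (Fin n → X) =>
        ℓ (A (i.insertNth (α := fun _ => X) ω.1 ω.2.2)) ω.1) Ω :=
      integrable_of_bounded' _ mG2 M fun ω => habs _ _
    have h1 : (∫ ω : X × X × (Fin n → X),
          ℓ (A (i.insertNth (α := fun _ => X) ω.2.1 ω.2.2)) ω.1 ∂Ω)
        = ∫ D, ∫ z, ℓ (A D) z ∂P ∂πN := by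
      rw [hΩ, integral_prod _ (hΩ ▸ iG)]
      have inner : ∀ z : X, (∫ q : X × (Fin n → X),
            ℓ (A (i.insertNth (α := fun _ => X) q.1 q.2)) z ∂(P.prod πn))
          = ∫ D, ℓ (A D) z ∂πN :=
        fun z => mp.integral_comp e.symm.measurableEmbedding (fun D => ℓ (A D) z)
      simp_rw [inner]
      exact integral_integral_swap (f := fun z D => ℓ (A D) z)
        (integrable_of_bounded' _ (hmeas.comp (measurable_snd.prodMk measurable_fst)) M
          fun q => habs _ _)
    have h2 : (∫ ω : X × X × (Fin n → X),
          ℓ (A (i.insertNth (α := fun _ => X) ω.1 ω.2.2)) ω.1 ∂Ω)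
        = ∫ D, ℓ (A D) (D i) ∂πN := by
      rw [hΩ, integral_prod _ (hΩ ▸ iG2)]
      have inner : ∀ z : X, (∫ q : X × (Fin n → X),
            ℓ (A (i.insertNth (α := fun _ => X) z q.2)) z ∂(P.prod πn))
          = ∫ f, ℓ (A (i.insertNth (α := fun _ => X) z f)) z ∂πn := by
        intro z
        rw [integral_prod]
        · simp [measure_univ]
        · exact integrable_of_bounded' _
            (hmeas.comp ((mins.comp (measurable_const.prodMk measurable_snd)).prodMk
              measurable_const)) M fun q => habs _ _
      simp_rw [inner]
      have swap : (∫ z, ∫ f, ℓ (A (i.insertNth (α := fun _ => X) z f)) z ∂πn ∂P)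
          = ∫ q : X × (Fin n → X),
              ℓ (A (i.insertNth (α := fun _ => X) q.1 q.2)) q.1 ∂(P.prod πn) := by
        rw [integral_prod]
        exact integrable_of_bounded' _
          (hmeas.comp (mins.prodMk measurable_fst)) M fun q => habs _ _
      rw [swap]
      have := mp.integral_comp e.symm.measurableEmbedding (fun D => ℓ (A D) (D i))
      simpa [hsymm, Fin.insertNth_apply_same] using this
    have h3 : |(∫ ω : X × X × (Fin n → X),
            ℓ (A (i.insertNth (α := fun _ => X) ω.2.1 ω.2.2)) ω.1 ∂Ω)
          - ∫ ω : X × X × (Fin n → X),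
            ℓ (A (i.insertNth (α := fun _ => X) ω.1 ω.2.2)) ω.1 ∂Ω| ≤ β := by
      rw [← integral_sub iG iG2]
      have hb : ∀ ω : X × X × (Fin n → X),
          |ℓ (A (i.insertNth (α := fun _ => X) ω.2.1 ω.2.2)) ω.1
            - ℓ (A (i.insertNth (α := fun _ => X) ω.1 ω.2.2)) ω.1| ≤ β := by
        intro ω
        have := hstable (i.insertNth (α := fun _ => X) ω.2.1 ω.2.2) i ω.1 ω.1
        rwa [update_insertNth'] at this
      have := norm_integral_le_of_norm_le_const (μ := Ω)
        (f := fun ω : X × X × (Fin n → X) =>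
          ℓ (A (i.insertNth (α := fun _ => X) ω.2.1 ω.2.2)) ω.1
            - ℓ (A (i.insertNth (α := fun _ => X) ω.1 ω.2.2)) ω.1) (C := β)
        (Filter.Eventually.of_forall fun ω => by simpa [Real.norm_eq_abs] using hb ω)
      simpa [Real.norm_eq_abs, measure_univ] using this
    rw [← h1, ← h2]
    exact h3
  -- assemble
  have isum : Integrable (fun D => (1 / ((n : ℝ) + 1)) * ∑ i, ℓ (A D) (D i)) πN :=
    (integrable_finset_sum _ fun i _ => ig i).const_mul _
  have hNcast : ((n : ℝ) + 1) ≠ 0 := by positivity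
  have expand : (∫ D, ((∫ x, ℓ (A D) x ∂P) - (1 / ((n + 1 : ℕ) : ℝ)) * ∑ i, ℓ (A D) (D i)) ∂πN)
      = (1 / ((n + 1 : ℕ) : ℝ)) * ∑ i : Fin (n + 1),
          ((∫ D, (∫ z, ℓ (A D) z ∂P) ∂πN) - ∫ D, ℓ (A D) (D i) ∂πN) := by
    push_cast
    rw [integral_sub iL isum, integral_const_mul, integral_finset_sum _ fun i _ => ig i,
      Finset.sum_sub_distrib, Finset.sum_const, Finset.card_univ, Fintype.card_fin, nsmul_eq_mul,
      mul_sub, ← mul_assoc]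
    push_cast
    rw [one_div, inv_mul_cancel₀ hNcast, one_mul]
  rw [expand]
  set a := ∫ D, (∫ z, ℓ (A D) z ∂P) ∂πN with ha
  have hc : (0 : ℝ) ≤ 1 / ((n + 1 : ℕ) : ℝ) := by positivity
  calc |(1 / ((n + 1 : ℕ) : ℝ)) * ∑ i : Fin (n + 1), (a - ∫ D, ℓ (A D) (D i) ∂πN)|
      ≤ (1 / ((n + 1 : ℕ) : ℝ)) * ∑ i : Fin (n + 1), |a - ∫ D, ℓ (A D) (D i) ∂πN| := by
        rw [abs_mul, abs_of_nonneg hc]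
        exact mul_le_mul_of_nonneg_left (Finset.abs_sum_le_sum_abs _ _) hc
    _ ≤ (1 / ((n + 1 : ℕ) : ℝ)) * ∑ _i : Fin (n + 1), β :=
        mul_le_mul_of_nonneg_left (Finset.sum_le_sum fun i _ => key i) hc
    _ = β := by
        rw [Finset.sum_const, Finset.card_univ, Fintype.card_fin, nsmul_eq_mul]
        have : ((n + 1 : ℕ) : ℝ) ≠ 0 := by positivity
        field_simp
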